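/- Let p : Fin 4 → ℝ be given by p = (2/5, 2/5, 1/10, 1/10), and let c : Fin 4 → ℕ be given by c = (0, 0, 1, 1). Then ∑_i p_i = 1, ∑_i c_i = 2, and ⌊p_i·2⌋ ≤ c_i ≤ ⌈p_i·2⌉ for every i (so the partial ranking with counts c at position k = 2 is feasible), yet there are two distinct indices i = 1 and i = 2 with c_i < ⌊p_i·3⌋; hence no single candidate chosen for position 3 can restore feasibility, and the counts c cannot be extended to a feasible prefix of length 3. (The counterexample of Theorem 1 showing that DetGreedy is not guaranteed to be feasible for |A| = 4.) -/

import Mathlib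

open Finset

/-- Theorem 1, counterexample for |A| = 4: with proportions
`p = (0.4, 0.4, 0.1, 0.1)` and counts `c = (0, 0, 1, 1)` at position `k = 2`,
the counts are feasible (they satisfy the floor/ceiling requirements and sum
to 2), yet two distinct attribute values are simultaneously below their
minimum representation requirement at position 3, so no single candidate
chosen for position 3 can restore feasibility. -/
theorem detGreedy_infeasible_four_attributes :
    let p : Fin 4 → ℝ := ![2/5, 2/5, 1/10, 1/10]
    let c : Fin 4 → ℕ := ![0, 0, 1, 1]
    (∑ i, p i = 1) ∧ (∑ i, c i = 2) ∧
      (∀ i, ⌊p i * (2 : ℝ)⌋ ≤ (c i : ℤ) ∧ (c i : ℤ) ≤ ⌈p i * (2 : ℝ)⌉) ∧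
      (0 : Fin 4) ≠ (1 : Fin 4) ∧
      (c 0 : ℤ) < ⌊p 0 * (3 : ℝ)⌋ ∧ (c 1 : ℤ) < ⌊p 1 * (3 : ℝ)⌋ := by
  refine ⟨by norm_num [Fin.sum_univ_four, Matrix.cons_val_two, Matrix.cons_val_three], by norm_num [Fin.sum_univ_four, Matrix.cons_val_two, Matrix.cons_val_three], ?_, by decide, ?_, ?_⟩
  · intro i
    have h1 : ⌊(4/5:ℝ)⌋ = 0 := by norm_num [Int.floor_eq_iff]
    have h2 : ⌈(4/5:ℝ)⌉ = 1 := by norm_num [Int.ceil_eq_iff]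
    have h3 : ⌊(1/5:ℝ)⌋ = 0 := by norm_num [Int.floor_eq_iff]
    have h4 : ⌈(1/5:ℝ)⌉ = 1 := by norm_num [Int.ceil_eq_iff]
    fin_cases i <;> norm_num [h1, h2, h3, h4]
  · norm_num [Int.le_floor]
  · norm_num [Int.le_floor]
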